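/- If y is obtained from x by a balancing step, then max_{i=1,…,n} f_i'(y_i) ≤ max_{i=1,…,n} f_i'(x_i). -/

import Mathlib

/-- A balancing step from state `x` to state `y`, specified by a finite set `E` of
unordered pairs of distinct nodes such that: (i) the derivatives of the two endpoints
of each pair differ; (ii) every node belongs to at most one pair in which its
derivative is the strictly larger of the two, and at most one pair in which its
derivative is the strictly smaller of the two; and
`y i = x i − Σ_{j : {i,j} ∈ E} (f_i'(x_i) − f_j'(x_j)) / (2(L_i + L_j))`. -/
def IsBalancingStep (n : ℕ) (f' : Fin n → ℝ → ℝ) (L : Fin n → ℝ)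
    (x y : Fin n → ℝ) (E : Finset (Sym2 (Fin n))) : Prop :=
  (∀ i j : Fin n, s(i, j) ∈ E → f' i (x i) ≠ f' j (x j)) ∧
  (∀ i : Fin n,
    (Finset.univ.filter fun j => s(i, j) ∈ E ∧ f' j (x j) < f' i (x i)).card ≤ 1) ∧
  (∀ i : Fin n,
    (Finset.univ.filter fun j => s(i, j) ∈ E ∧ f' i (x i) < f' j (x j)).card ≤ 1) ∧
  (∀ i : Fin n, y i = x i - ∑ j ∈ Finset.univ.filter (fun j => s(i, j) ∈ E),
      (f' i (x i) - f' j (x j)) / (2 * (L i + L j)))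

/-- If y is obtained from x by a balancing step, then
max_i f_i'(y_i) ≤ max_i f_i'(x_i). -/
theorem stmt_3 (n : ℕ) (hn : 0 < n) (f f' : Fin n → ℝ → ℝ) (L : Fin n → ℝ)
    (hL : ∀ i, 0 < L i)
    (hconv : ∀ i, ConvexOn ℝ Set.univ (f i))
    (hderiv : ∀ i t, HasDerivAt (f i) (f' i t) t)
    (hlip : ∀ i, ∀ a b : ℝ, |f' i a - f' i b| ≤ L i * |a - b|)
    (x y : Fin n → ℝ) (E : Finset (Sym2 (Fin n)))
    (hstep : IsBalancingStep n f' L x y E) :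
    Finset.univ.sup' ⟨⟨0, hn⟩, Finset.mem_univ _⟩ (fun i => f' i (y i)) ≤
      Finset.univ.sup' ⟨⟨0, hn⟩, Finset.mem_univ _⟩ (fun i => f' i (x i)) := by
  obtain ⟨hne, hlow, hhigh, hy⟩ := hstep
  set M := Finset.univ.sup' ⟨⟨0, hn⟩, Finset.mem_univ _⟩ (fun i => f' i (x i)) with hMdef
  apply Finset.sup'_le
  intro i _
  have hiM : f' i (x i) ≤ M := Finset.le_sup' (fun k => f' k (x k)) (Finset.mem_univ i)
  -- monotonicity of f' i
  have hmono : Monotone (f' i) := by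
    have h := (hconv i).monotoneOn_deriv (fun t _ => (hderiv i t).differentiableAt)
    intro a b hab
    have := h (Set.mem_univ a) (Set.mem_univ b) hab
    rwa [(hderiv i a).deriv, (hderiv i b).deriv] at this
  set S : Finset (Fin n) := Finset.univ.filter (fun j => s(i, j) ∈ E) with hS
  set g : Fin n → ℝ := fun j => (f' i (x i) - f' j (x j)) / (2 * (L i + L j)) with hg
  set A : Finset (Fin n) :=
    Finset.univ.filter (fun j => s(i, j) ∈ E ∧ f' j (x j) < f' i (x i)) with hA
  set B : Finset (Fin n) :=
    Finset.univ.filter (fun j => s(i, j) ∈ E ∧ f' i (x i) < f' j (x j)) with hB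
  have hsplit : ∑ j ∈ S, g j = ∑ j ∈ A, g j + ∑ j ∈ B, g j := by
    have h1 : S.filter (fun j => f' j (x j) < f' i (x i)) = A := by
      ext j; simp [hS, hA, and_comm]
    have h2 : S.filter (fun j => ¬ f' j (x j) < f' i (x i)) = B := by
      ext j
      simp only [hS, hB, Finset.mem_filter, Finset.mem_univ, true_and]
      constructor
      · rintro ⟨hj, hlt⟩
        exact ⟨hj, lt_of_le_of_ne (not_lt.mp hlt) (hne i j hj)⟩
      · rintro ⟨hj, hlt⟩
        exact ⟨hj, not_lt.mpr hlt.le⟩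
    rw [← h1, ← h2]
    exact (Finset.sum_filter_add_sum_filter_not S _ g).symm
  have hAnn : 0 ≤ ∑ j ∈ A, g j := by
    apply Finset.sum_nonneg
    intro j hj
    simp only [hA, Finset.mem_filter, Finset.mem_univ, true_and] at hj
    have hden : 0 < 2 * (L i + L j) := by nlinarith [hL i, hL j]
    exact div_nonneg (by linarith [hj.2]) hden.le
  have hyi : y i = x i - (∑ j ∈ A, g j + ∑ j ∈ B, g j) := by
    rw [hy i, hsplit]
  rcases le_or_gt (y i) (x i) with h | h
  · exact le_trans (hmono h) hiM
  -- y i > x i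
  have hB1 : L i * (-(∑ j ∈ B, g j)) ≤ (M - f' i (x i)) / 2 := by
    have hMf : 0 ≤ (M - f' i (x i)) / 2 := by linarith
    have : -(∑ j ∈ B, g j) = ∑ j ∈ B, -(g j) := by rw [Finset.sum_neg_distrib]
    rw [this, Finset.mul_sum]
    calc ∑ j ∈ B, L i * (-(g j)) ≤ ∑ j ∈ B, (M - f' i (x i)) / 2 := by
          apply Finset.sum_le_sum
          intro j hj
          simp only [hB, Finset.mem_filter, Finset.mem_univ, true_and] at hj
          have hjM : f' j (x j) ≤ M := Finset.le_sup' (fun k => f' k (x k)) (Finset.mem_univ j)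
          have hLi := hL i
          have hLj := hL j
          have hgj : -(g j) = (f' j (x j) - f' i (x i)) / (2 * (L i + L j)) := by
            rw [hg]; ring
          rw [hgj]
          rw [← mul_div_assoc, div_le_div_iff₀ (by positivity) (by norm_num : (0:ℝ) < 2)]
          nlinarith [hj.2]
      _ ≤ (M - f' i (x i)) / 2 := by
          rw [Finset.sum_const, nsmul_eq_mul]
          have hcard : (B.card : ℝ) ≤ 1 := by exact_mod_cast hhigh i
          nlinarith
  have hlip' : f' i (y i) - f' i (x i) ≤ L i * (y i - x i) := by
    have := hlip i (y i) (x i)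
    have habs : |y i - x i| = y i - x i := abs_of_pos (by linarith)
    calc f' i (y i) - f' i (x i) ≤ |f' i (y i) - f' i (x i)| := le_abs_self _
      _ ≤ L i * |y i - x i| := this
      _ = L i * (y i - x i) := by rw [habs]
  have hdelta : y i - x i ≤ -(∑ j ∈ B, g j) := by
    rw [hyi]; linarith
  have hLd : L i * (y i - x i) ≤ L i * (-(∑ j ∈ B, g j)) :=
    mul_le_mul_of_nonneg_left hdelta (hL i).le
  linarith
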